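/- Let x_1, …, x_m be unit vectors in ℝ^d with x_i·x_j = 0 for every i ≠ j, and let y_i ∈ {−1,+1} be labels with I_- := {i ∈ [m] : y_i = −1}. Then there exist a width n and a KKT point θ of the margin-maximization problem for bias-less 2-layer ReLU networks of width n such that Pr_{x~Unif(S^{d−1})}[N_θ(x) ≤ 0] ≥ 1/2 − 1/2^{|I_-|}. -/

import Mathlib

open MeasureTheory

/-- ReLU. -/
noncomputable def relu (z : ℝ) : ℝ := max z 0

/-- Bias-less 2-layer ReLU network on ℝ^d. -/
noncomputable def netNB {d n : ℕ} (v : Fin n → ℝ) (w : Fin n → EuclideanSpace ℝ (Fin d))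
    (x : EuclideanSpace ℝ (Fin d)) : ℝ :=
  ∑ j, v j * relu (inner ℝ (w j) x : ℝ)

/-- KKT point of the margin-maximization problem for bias-less networks. -/
def IsKKTNB {d m n : ℕ} (x : Fin m → EuclideanSpace ℝ (Fin d)) (y : Fin m → ℝ)
    (v : Fin n → ℝ) (w : Fin n → EuclideanSpace ℝ (Fin d)) : Prop :=
  (∀ i, 1 ≤ y i * netNB v w (x i)) ∧
  ∃ (lam : Fin m → ℝ) (s : Fin m → Fin n → ℝ),
    (∀ i, 0 ≤ lam i) ∧
    (∀ i j, s i j ∈ Set.Icc (0 : ℝ) 1) ∧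
    (∀ i j, 0 < (inner ℝ (w j) (x i) : ℝ) → s i j = 1) ∧
    (∀ i j, (inner ℝ (w j) (x i) : ℝ) < 0 → s i j = 0) ∧
    (∀ j, w j = ∑ i, (lam i * y i * v j * s i j) • x i) ∧
    (∀ j, v j = ∑ i, lam i * y i * relu (inner ℝ (w j) (x i) : ℝ)) ∧
    (∀ i, lam i * (y i * netNB v w (x i) - 1) = 0)

/-- Uniform probability measure on the unit sphere S^{d-1} ⊂ ℝ^d. -/
noncomputable def unifSphere (d : ℕ) : Measure (EuclideanSpace ℝ (Fin d)) :=
  (μH[(d : ℝ) - 1] (Metric.sphere (0 : EuclideanSpace ℝ (Fin d)) 1))⁻¹ •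
    (μH[(d : ℝ) - 1]).restrict (Metric.sphere 0 1)


open Metric
open scoped NNReal ENNReal

section AuxSphere

lemma coord_le_norm {e : ℕ} (z : EuclideanSpace ℝ (Fin e)) (i : Fin e) : |z i| ≤ ‖z‖ := by
  rw [EuclideanSpace.norm_eq, ← Real.sqrt_sq_eq_abs]
  apply Real.sqrt_le_sqrt
  have := Finset.single_le_sum (f := fun j => ‖z j‖^2) (fun j _ => sq_nonneg _) (Finset.mem_univ i)
  simpa [Real.norm_eq_abs, sq_abs] using this

lemma radial_lip {E : Type*} [NormedAddCommGroup E] [NormedSpace ℝ E] :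
    LipschitzOnWith 2 (fun z : E => ‖z‖⁻¹ • z) {z : E | 1 ≤ ‖z‖} := by
  apply LipschitzOnWith.of_dist_le_mul
  intro x hx y hy
  simp only [Set.mem_setOf_eq] at hx hy
  have hx0 : (0:ℝ) < ‖x‖ := lt_of_lt_of_le one_pos hx
  have hy0 : (0:ℝ) < ‖y‖ := lt_of_lt_of_le one_pos hy
  have key : ‖x‖⁻¹ • x - ‖y‖⁻¹ • y = ‖x‖⁻¹ • (x - y) + (‖x‖⁻¹ - ‖y‖⁻¹) • y := by
    rw [smul_sub, sub_smul]; abel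
  rw [dist_eq_norm, key]
  have hinv : ‖x‖⁻¹ ≤ 1 := inv_le_one_of_one_le₀ hx
  have h1 : ‖‖x‖⁻¹ • (x - y)‖ ≤ ‖x - y‖ := by
    rw [norm_smul, Real.norm_eq_abs, abs_of_pos (inv_pos.2 hx0)]
    nlinarith [norm_nonneg (x - y)]
  have h2 : ‖(‖x‖⁻¹ - ‖y‖⁻¹) • y‖ ≤ ‖x - y‖ := by
    rw [norm_smul, Real.norm_eq_abs]
    have heq : ‖x‖⁻¹ - ‖y‖⁻¹ = (‖y‖ - ‖x‖) / (‖x‖ * ‖y‖) := by field_simp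
    rw [heq, abs_div, abs_of_pos (show (0:ℝ) < ‖x‖ * ‖y‖ from mul_pos hx0 hy0)]
    have habs : |‖y‖ - ‖x‖| ≤ ‖x - y‖ := by
      rw [show ‖x - y‖ = ‖y - x‖ from (norm_sub_rev x y)]
      exact abs_norm_sub_norm_le y x
    rw [div_mul_eq_mul_div, div_le_iff₀ (mul_pos hx0 hy0)]
    nlinarith [abs_nonneg (‖y‖ - ‖x‖), norm_nonneg (x - y),
      mul_le_mul_of_nonneg_right habs hy0.le,
      mul_nonneg (mul_nonneg (norm_nonneg (x-y)) hy0.le) (sub_nonneg.2 hx)]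
  refine le_trans (norm_add_le _ _) (le_trans (add_le_add h1 h2) ?_)
  rw [dist_eq_norm]
  push_cast
  ring_nf
  nlinarith [norm_nonneg (x - y)]

lemma insert_lip (e : ℕ) (j : Fin (e+1)) (ε : ℝ) :
    LipschitzWith (e+1 : ℝ≥0)
      (fun a : Fin e → ℝ => ((WithLp.equiv 2 (Fin (e+1) → ℝ)).symm (j.insertNth ε a))) := by
  apply LipschitzWith.of_dist_le_mul
  intro a b
  rw [EuclideanSpace.dist_eq]
  have hsum : ∑ i : Fin (e+1), dist ((WithLp.equiv 2 (Fin (e+1) → ℝ)).symm (j.insertNth ε a) i)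
        ((WithLp.equiv 2 (Fin (e+1) → ℝ)).symm (j.insertNth ε b) i) ^ 2
      = ∑ i : Fin e, dist (a i) (b i) ^ 2 := by
    simp only [WithLp.equiv_symm_apply, PiLp.toLp_apply]
    rw [Fin.sum_univ_succAbove _ j]
    simp [Fin.insertNth_apply_same, Fin.insertNth_apply_succAbove]
  rw [hsum]
  have hub : ∑ i : Fin e, dist (a i) (b i) ^ 2 ≤ ((e+1 : ℝ) * dist a b) ^ 2 := by
    have h1 : ∀ i : Fin e, dist (a i) (b i) ^ 2 ≤ dist a b ^ 2 := by
      intro i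
      have := dist_le_pi_dist a b i
      nlinarith [dist_nonneg (x := a i) (y := b i)]
    calc ∑ i : Fin e, dist (a i) (b i) ^ 2 ≤ ∑ _i : Fin e, dist a b ^ 2 :=
          Finset.sum_le_sum (fun i _ => h1 i)
      _ = (e : ℝ) * dist a b ^ 2 := by simp [mul_comm]
      _ ≤ ((e+1 : ℝ) * dist a b) ^ 2 := by nlinarith [dist_nonneg (x := a) (y := b), sq_nonneg (dist a b)]
  refine le_trans (Real.sqrt_le_sqrt hub) ?_
  rw [Real.sqrt_sq (by positivity)]
  push_cast
  ring_nf
  rfl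

lemma haus_sphere_lt_top (e : ℕ) :
    μH[(e:ℝ)] (sphere (0 : EuclideanSpace ℝ (Fin (e+1))) 1) < ⊤ := by
  classical
  set E := EuclideanSpace ℝ (Fin (e+1))
  set g : E → E := fun z => ‖z‖⁻¹ • z with hg
  set T : Set E := {z : E | 1 ≤ ‖z‖} with hT
  set C : Set (Fin e → ℝ) := closedBall (0 : Fin e → ℝ) (Real.sqrt (e+1)) with hC
  set F : Fin (e+1) × Bool → Set E := fun p =>
    g '' ((fun a : Fin e → ℝ => ((WithLp.equiv 2 (Fin (e+1) → ℝ)).symm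
      (p.1.insertNth (if p.2 then (1:ℝ) else -1) a))) '' C ∩ T) with hF
  have hCvol : μH[(e:ℝ)] C < ⊤ := by
    have hpi : (μH[(e:ℝ)] : Measure (Fin e → ℝ)) = volume := by
      have := hausdorffMeasure_pi_real (ι := Fin e)
      simpa [Fintype.card_fin] using this
    rw [hpi]
    exact measure_closedBall_lt_top
  have hFbound : ∀ p, μH[(e:ℝ)] (F p) < ⊤ := by
    intro p
    have h1 : μH[(e:ℝ)] (F p) ≤ (2:ℝ≥0) ^ (e:ℝ) *
        μH[(e:ℝ)] ((fun a : Fin e → ℝ => ((WithLp.equiv 2 (Fin (e+1) → ℝ)).symm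
          (p.1.insertNth (if p.2 then (1:ℝ) else -1) a))) '' C ∩ T) := by
      exact (radial_lip.mono Set.inter_subset_right).hausdorffMeasure_image_le (by positivity)
    have h2 : μH[(e:ℝ)] ((fun a : Fin e → ℝ => ((WithLp.equiv 2 (Fin (e+1) → ℝ)).symm
          (p.1.insertNth (if p.2 then (1:ℝ) else -1) a))) '' C ∩ T)
        ≤ ((e+1:ℝ≥0)) ^ (e:ℝ) * μH[(e:ℝ)] C := by
      refine le_trans (measure_mono Set.inter_subset_left) ?_
      exact (insert_lip e p.1 _).hausdorffMeasure_image_le (by positivity) C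
    calc μH[(e:ℝ)] (F p) ≤ _ := h1
      _ ≤ (2:ℝ≥0) ^ (e:ℝ) * (((e+1:ℝ≥0)) ^ (e:ℝ) * μH[(e:ℝ)] C) := by
          gcongr
      _ < ⊤ := by
          refine ENNReal.mul_lt_top ?_ (ENNReal.mul_lt_top ?_ hCvol)
          · exact ENNReal.rpow_lt_top_of_nonneg (by positivity) (by simp)
          · exact ENNReal.rpow_lt_top_of_nonneg (by positivity) (by simp)
  have hcover : sphere (0 : E) 1 ⊆ ⋃ p, F p := by
    intro z hz
    rw [mem_sphere_zero_iff_norm] at hz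
    obtain ⟨j, -, hj⟩ := Finset.exists_max_image Finset.univ (fun i => |z i|)
      ⟨0, Finset.mem_univ 0⟩
    have hcoord : ∀ i, |z i| ≤ |z j| := fun i => hj i (Finset.mem_univ i)
    set t := |z j| with htdef
    have hsumz : ∑ i, z i ^ 2 = 1 := by
      have h := EuclideanSpace.norm_eq z
      rw [hz] at h
      have h2 : Real.sqrt (∑ i, ‖z i‖^2) = 1 := h.symm
      have h3 : ∑ i, ‖z i‖^2 = 1 := by
        have hnn : (0:ℝ) ≤ ∑ i, ‖z i‖^2 := Finset.sum_nonneg fun i _ => sq_nonneg _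
        nlinarith [Real.sq_sqrt hnn]
      simpa [Real.norm_eq_abs, sq_abs] using h3
    have h1le : 1 ≤ (e+1:ℝ) * t^2 := by
      have hstep : ∑ i, z i ^ 2 ≤ ∑ _i : Fin (e+1), t^2 := by
        refine Finset.sum_le_sum fun i _ => ?_
        have := hcoord i
        nlinarith [abs_nonneg (z i), sq_abs (z i)]
      rw [hsumz] at hstep
      simpa [Finset.sum_const, Finset.card_univ, mul_comm] using hstep
    have ht0 : 0 < t := by
      rcases (abs_nonneg (z j)).lt_or_eq with h | h
      · exact h
      · exfalso; rw [htdef, ← h] at h1le; simp at h1le; linarith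
    have ht1 : t ≤ 1 := by
      have := coord_le_norm z j
      rw [hz] at this; exact this
    set w : E := t⁻¹ • z with hw
    have hwnorm : ‖w‖ = t⁻¹ := by
      rw [hw, norm_smul, Real.norm_eq_abs, abs_of_pos (inv_pos.2 ht0), hz, mul_one]
    have hwT : w ∈ T := by
      rw [hT, Set.mem_setOf_eq, hwnorm]
      exact one_le_inv_iff₀.2 ⟨ht0, ht1⟩
    have hzj : z j ≠ 0 := by
      intro h0
      rw [htdef, h0, abs_zero] at ht0
      exact lt_irrefl _ ht0
    have hwj : w j = if 0 ≤ z j then (1:ℝ) else -1 := by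
      have hwj0 : w j = t⁻¹ * z j := rfl
      rw [hwj0]
      split_ifs with h
      · rw [htdef, abs_of_nonneg h]
        exact inv_mul_cancel₀ hzj
      · push_neg at h
        rw [htdef, abs_of_neg h, ← neg_inv, neg_mul, inv_mul_cancel₀ hzj]
    set b : Bool := if 0 ≤ z j then true else false with hb
    set a : Fin e → ℝ := j.removeNth ((WithLp.equiv 2 (Fin (e+1) → ℝ)) w) with ha
    have hfa : ((WithLp.equiv 2 (Fin (e+1) → ℝ)).symm
        (j.insertNth (if b then (1:ℝ) else -1) a)) = w := by
      have hεb : (if b then (1:ℝ) else -1) = ((WithLp.equiv 2 (Fin (e+1) → ℝ)) w) j := by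
        rw [hb]
        have : ((WithLp.equiv 2 (Fin (e+1) → ℝ)) w) j = w j := rfl
        rw [this, hwj]
        by_cases h : 0 ≤ z j <;> simp [h]
      rw [hεb, ha, Fin.insertNth_self_removeNth]
      exact Equiv.symm_apply_apply _ _
    have hsq1 : 1 ≤ Real.sqrt (e+1) * t := by
      have h1 : (0:ℝ) ≤ (e+1:ℝ) := by positivity
      have hu2 : (Real.sqrt ((e:ℝ)+1) * t)^2 = ((e:ℝ)+1) * t^2 := by
        rw [mul_pow, Real.sq_sqrt h1]
      have hpos : 0 < Real.sqrt ((e:ℝ)+1) * t :=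
        mul_pos (Real.sqrt_pos.2 (by positivity)) ht0
      nlinarith [hu2, h1le, hpos]
    have htinv : t⁻¹ ≤ Real.sqrt (e+1) := by
      have hinv : t⁻¹ * t = 1 := inv_mul_cancel₀ ht0.ne'
      calc t⁻¹ = t⁻¹ * 1 := (mul_one _).symm
        _ ≤ t⁻¹ * (Real.sqrt ((e:ℝ)+1) * t) :=
            mul_le_mul_of_nonneg_left hsq1 (inv_pos.2 ht0).le
        _ = Real.sqrt ((e:ℝ)+1) * (t⁻¹ * t) := by ring
        _ = Real.sqrt ((e:ℝ)+1) := by rw [hinv, mul_one]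
    have haC : a ∈ C := by
      rw [hC, mem_closedBall]
      rw [dist_pi_le_iff (Real.sqrt_nonneg _)]
      intro i
      have : a i = w (j.succAbove i) := rfl
      rw [Real.dist_eq, this]
      simp only [Pi.zero_apply, sub_zero]
      exact le_trans (le_trans (coord_le_norm w _) (le_of_eq hwnorm)) htinv
    have hgw : g w = z := by
      rw [hg]
      simp only
      rw [hwnorm, inv_inv, hw, smul_smul, mul_inv_cancel₀ ht0.ne', one_smul]
    refine Set.mem_iUnion.2 ⟨(j, b), ?_⟩
    rw [hF]
    exact ⟨w, ⟨⟨a, haC, hfa⟩, hwT⟩, hgw⟩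
  refine lt_of_le_of_lt (le_trans (measure_mono hcover) (measure_iUnion_le F)) ?_
  rw [tsum_fintype]
  exact ENNReal.sum_lt_top.2 fun p _ => hFbound p

lemma haus_sphere_pos (e : ℕ) (he : 1 ≤ e) :
    0 < μH[(e:ℝ)] (sphere (0 : EuclideanSpace ℝ (Fin (e+1))) 1) := by
  have hepos : (0:ℝ) < e := by exact_mod_cast he
  set π : EuclideanSpace ℝ (Fin (e+1)) → (Fin e → ℝ) := fun z i => z i.succ with hπ
  have hlip : LipschitzWith 1 π := by
    apply LipschitzWith.of_dist_le_mul
    intro z z'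
    rw [NNReal.coe_one, one_mul, dist_pi_le_iff dist_nonneg]
    intro i
    have hcoords : z i.succ - z' i.succ = (z - z') i.succ := by simp
    rw [Real.dist_eq, hcoords, dist_eq_norm]
    exact coord_le_norm (z - z') i.succ
  set r : ℝ := (Real.sqrt e)⁻¹ with hr
  have hrpos : 0 < r := by
    rw [hr]; exact inv_pos.2 (Real.sqrt_pos.2 hepos)
  have hsubset : closedBall (0 : Fin e → ℝ) r ⊆ π '' sphere (0 : EuclideanSpace ℝ (Fin (e+1))) 1 := by
    intro a haa
    rw [mem_closedBall] at haa
    have hcoord : ∀ i, a i ^ 2 ≤ (e:ℝ)⁻¹ := by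
      intro i
      have h1 : dist (a i) 0 ≤ r := le_trans (dist_le_pi_dist a 0 i) haa
      rw [Real.dist_eq, sub_zero] at h1
      have h2 : a i ^ 2 ≤ r ^ 2 := by nlinarith [abs_nonneg (a i), sq_abs (a i)]
      have h3 : r ^ 2 = (e:ℝ)⁻¹ := by
        rw [hr, inv_pow, Real.sq_sqrt hepos.le]
      rw [← h3]; exact h2
    have hsum : ∑ i, a i ^ 2 ≤ 1 := by
      calc ∑ i, a i ^ 2 ≤ ∑ _i : Fin e, (e:ℝ)⁻¹ := Finset.sum_le_sum fun i _ => hcoord i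
        _ = (e:ℝ) * (e:ℝ)⁻¹ := by simp [Finset.sum_const, Finset.card_univ, mul_comm]
        _ = 1 := mul_inv_cancel₀ hepos.ne'
    set h : ℝ := Real.sqrt (1 - ∑ i, a i ^ 2) with hh
    set z : EuclideanSpace ℝ (Fin (e+1)) := (WithLp.equiv 2 (Fin (e+1) → ℝ)).symm (Fin.cons h a) with hz
    refine ⟨z, ?_, ?_⟩
    · rw [mem_sphere_zero_iff_norm, EuclideanSpace.norm_eq]
      have hzc : ∀ i : Fin (e+1), z i = (Fin.cons h a : Fin (e+1) → ℝ) i := fun i => by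
        rw [hz]; exact rfl
      have hsum2 : ∑ i : Fin (e+1), ‖z i‖ ^ 2 = h ^ 2 + ∑ i : Fin e, ‖a i‖ ^ 2 := by
        rw [Fin.sum_univ_succ]
        have e1 : ‖z 0‖ ^ 2 = h ^ 2 := by
          rw [hzc 0, Fin.cons_zero, Real.norm_eq_abs, sq_abs]
        have e2 : ∑ i : Fin e, ‖z i.succ‖ ^ 2 = ∑ i : Fin e, ‖a i‖ ^ 2 :=
          Finset.sum_congr rfl fun i _ => by rw [hzc i.succ, Fin.cons_succ]
        rw [e1, e2]
      rw [hsum2]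
      have hh2 : h ^ 2 = 1 - ∑ i, a i ^ 2 := Real.sq_sqrt (by linarith)
      have : h ^ 2 + ∑ i : Fin e, ‖a i‖ ^ 2 = 1 := by
        have : ∑ i : Fin e, ‖a i‖ ^ 2 = ∑ i, a i ^ 2 := by
          refine Finset.sum_congr rfl fun i _ => by rw [Real.norm_eq_abs, sq_abs]
        rw [this, hh2]; ring
      rw [this, Real.sqrt_one]
    · funext i
      rw [hπ]
      simp only
      have hzc : z i.succ = (Fin.cons h a : Fin (e+1) → ℝ) i.succ := by
        rw [hz]; exact rfl
      rw [hzc, Fin.cons_succ]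
  have hpi : (μH[(e:ℝ)] : Measure (Fin e → ℝ)) = volume := by
    have := hausdorffMeasure_pi_real (ι := Fin e)
    simpa [Fintype.card_fin] using this
  have hball : 0 < μH[(e:ℝ)] (closedBall (0 : Fin e → ℝ) r) := by
    rw [hpi]
    exact measure_closedBall_pos _ _ hrpos
  have himg : μH[(e:ℝ)] (closedBall (0 : Fin e → ℝ) r)
      ≤ μH[(e:ℝ)] (π '' sphere (0 : EuclideanSpace ℝ (Fin (e+1))) 1) :=
    measure_mono hsubset
  have hfinal := hlip.hausdorffMeasure_image_le (show (0:ℝ) ≤ (e:ℝ) by positivity)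
    (sphere (0 : EuclideanSpace ℝ (Fin (e+1))) 1)
  simp only [ENNReal.coe_one, ENNReal.one_rpow, one_mul] at hfinal
  exact lt_of_lt_of_le hball (le_trans himg hfinal)

end AuxSphere

lemma unifSphere_half {d : ℕ} (hd : 2 ≤ d) (u : EuclideanSpace ℝ (Fin d))
    (t : Set (EuclideanSpace ℝ (Fin d)))
    (hsub : {z : EuclideanSpace ℝ (Fin d) | (inner ℝ u z : ℝ) ≤ 0} ⊆ t) :
    (1/2 : ℝ) ≤ (unifSphere d t).toReal := by
  obtain ⟨e, rfl⟩ : ∃ e, d = e + 1 := ⟨d - 1, by omega⟩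
  have he : 1 ≤ e := by omega
  have hexp : ((e + 1 : ℕ) : ℝ) - 1 = (e : ℝ) := by push_cast; ring
  set S : Set (EuclideanSpace ℝ (Fin (e+1))) := sphere 0 1 with hS
  have hSmeas : MeasurableSet S := Metric.isClosed_sphere.measurableSet
  set ν : Measure (EuclideanSpace ℝ (Fin (e+1))) := μH[(e:ℝ)] with hν
  have happ : ∀ s : Set (EuclideanSpace ℝ (Fin (e+1))),
      unifSphere (e+1) s = (ν S)⁻¹ * ν (s ∩ S) := by
    intro s
    rw [unifSphere]
    simp only [hexp]
    rw [Measure.smul_apply, smul_eq_mul, Measure.restrict_apply' hSmeas]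
  have hc0 : ν S ≠ 0 := (haus_sphere_pos e he).ne'
  have hctop : ν S ≠ ⊤ := (haus_sphere_lt_top e).ne
  set A : Set _ := {z : EuclideanSpace ℝ (Fin (e+1)) | (inner ℝ u z : ℝ) ≤ 0} with hA
  set B : Set _ := {z : EuclideanSpace ℝ (Fin (e+1)) | 0 ≤ (inner ℝ u z : ℝ)} with hB
  have himg : (fun z : EuclideanSpace ℝ (Fin (e+1)) => -z) '' (A ∩ S) = B ∩ S := by
    ext z
    constructor
    · rintro ⟨w, ⟨hwA, hwS⟩, rfl⟩
      refine ⟨?_, ?_⟩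
      · simp only [hB, Set.mem_setOf_eq, inner_neg_right]
        simp only [hA, Set.mem_setOf_eq] at hwA
        linarith
      · rw [hS, mem_sphere_zero_iff_norm] at *
        rw [norm_neg]; exact hwS
    · rintro ⟨hzB, hzS⟩
      refine ⟨-z, ⟨?_, ?_⟩, neg_neg z⟩
      · simp only [hA, Set.mem_setOf_eq, inner_neg_right]
        simp only [hB, Set.mem_setOf_eq] at hzB
        linarith
      · rw [hS, mem_sphere_zero_iff_norm] at *
        rw [norm_neg]; exact hzS
  have hABS : ν (B ∩ S) = ν (A ∩ S) := by
    rw [← himg, hν]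
    exact Isometry.hausdorffMeasure_image isometry_neg (Or.inl (by positivity)) _
  have hcover : S = (A ∩ S) ∪ (B ∩ S) := by
    rw [← Set.union_inter_distrib_right]
    have : A ∪ B = Set.univ := by
      ext z
      simp only [hA, hB, Set.mem_union, Set.mem_setOf_eq, Set.mem_univ, iff_true]
      exact le_total _ _
    rw [this, Set.univ_inter]
  have hhalf : ν S ≤ 2 * ν (A ∩ S) := by
    calc ν S = ν ((A ∩ S) ∪ (B ∩ S)) := by rw [← hcover]
      _ ≤ ν (A ∩ S) + ν (B ∩ S) := measure_union_le _ _
      _ = 2 * ν (A ∩ S) := by rw [hABS, two_mul]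
  have hmono : ν (A ∩ S) ≤ ν (t ∩ S) :=
    measure_mono (Set.inter_subset_inter_left S hsub)
  have hupper : unifSphere (e+1) t ≤ 1 := by
    rw [happ t]
    calc (ν S)⁻¹ * ν (t ∩ S) ≤ (ν S)⁻¹ * ν S :=
          mul_le_mul_right (measure_mono Set.inter_subset_right) _
      _ = 1 := ENNReal.inv_mul_cancel hc0 hctop
  have hlower : (2 : ℝ≥0∞)⁻¹ ≤ unifSphere (e+1) t := by
    rw [happ t]
    have h1 : (2:ℝ≥0∞)⁻¹ * ν S ≤ ν (A ∩ S) := by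
      calc (2:ℝ≥0∞)⁻¹ * ν S ≤ (2:ℝ≥0∞)⁻¹ * (2 * ν (A ∩ S)) := mul_le_mul_right hhalf _
        _ = ((2:ℝ≥0∞)⁻¹ * 2) * ν (A ∩ S) := by rw [mul_assoc]
        _ = ν (A ∩ S) := by
            rw [ENNReal.inv_mul_cancel (by norm_num) (by norm_num), one_mul]
    calc (2:ℝ≥0∞)⁻¹ = (2:ℝ≥0∞)⁻¹ * ((ν S)⁻¹ * ν S) := by
          rw [ENNReal.inv_mul_cancel hc0 hctop, mul_one]
      _ = (ν S)⁻¹ * ((2:ℝ≥0∞)⁻¹ * ν S) := by ring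
      _ ≤ (ν S)⁻¹ * ν (A ∩ S) := mul_le_mul_right h1 _
      _ ≤ (ν S)⁻¹ * ν (t ∩ S) := mul_le_mul_right hmono _
  have hne : unifSphere (e+1) t ≠ ⊤ :=
    (lt_of_le_of_lt hupper (by norm_num)).ne
  have := ENNReal.toReal_mono hne hlower
  rw [show ((2:ℝ≥0∞)⁻¹).toReal = (1/2 : ℝ) by simp [ENNReal.toReal_inv]] at this
  exact this


/-- Benign overfitting does not follow from KKT without bias (Proposition 4.6). -/
theorem stmt6 {d m : ℕ}
    (x : Fin m → EuclideanSpace ℝ (Fin d)) (y : Fin m → ℝ)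
    (hx : ∀ i, ‖x i‖ = 1)
    (horth : ∀ i j, i ≠ j → (inner ℝ (x i) (x j) : ℝ) = 0)
    (hy : ∀ i, y i = 1 ∨ y i = -1) :
    ∃ (n : ℕ) (v : Fin n → ℝ) (w : Fin n → EuclideanSpace ℝ (Fin d)),
      IsKKTNB x y v w ∧
      1 / 2 - 1 / 2 ^ (({i | y i = -1} : Set (Fin m)).ncard) ≤
        (unifSphere d {z | netNB v w z ≤ 0}).toReal := by
  classical
  -- basic relu facts
  have hrelu_nonneg : ∀ z : ℝ, 0 ≤ relu z := fun z => le_max_right z 0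
  have hrelu_nonpos : ∀ z : ℝ, z ≤ 0 → relu z = 0 := fun z hz => max_eq_right hz
  have hrelu_id : ∀ z : ℝ, 0 ≤ z → relu z = z := fun z hz => max_eq_left hz
  set Pos : Finset (Fin m) := Finset.univ.filter (fun i => y i = 1) with hPos
  set Neg : Finset (Fin m) := Finset.univ.filter (fun i => y i = -1) with hNeg
  have hPmem : ∀ i, i ∈ Pos ↔ y i = 1 := by intro i; simp [hPos]
  have hNmem : ∀ i, i ∈ Neg ↔ y i = -1 := by intro i; simp [hNeg]
  set p : ℕ := Pos.card with hp
  set k : ℕ := Neg.card with hk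
  set up : EuclideanSpace ℝ (Fin d) := ∑ i ∈ Pos, x i with hup
  set un : EuclideanSpace ℝ (Fin d) := ∑ i ∈ Neg, x i with hun
  have hinner_up : ∀ i, (inner ℝ up (x i) : ℝ) = if i ∈ Pos then 1 else 0 := by
    intro i
    rw [hup, sum_inner]
    by_cases hi : i ∈ Pos
    · rw [if_pos hi]
      rw [Finset.sum_eq_single_of_mem i hi (fun j _ hne => horth j i hne)]
      rw [real_inner_self_eq_norm_mul_norm, hx i, mul_one]
    · rw [if_neg hi]
      exact Finset.sum_eq_zero fun j hj => horth j i (fun h => hi (h ▸ hj))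
  have hinner_un : ∀ i, (inner ℝ un (x i) : ℝ) = if i ∈ Neg then 1 else 0 := by
    intro i
    rw [hun, sum_inner]
    by_cases hi : i ∈ Neg
    · rw [if_pos hi]
      rw [Finset.sum_eq_single_of_mem i hi (fun j _ hne => horth j i hne)]
      rw [real_inner_self_eq_norm_mul_norm, hx i, mul_one]
    · rw [if_neg hi]
      exact Finset.sum_eq_zero fun j hj => horth j i (fun h => hi (h ▸ hj))
  set bp : ℝ := (p:ℝ) ^ ((4:ℝ)⁻¹) with hbp
  set bk : ℝ := (k:ℝ) ^ ((4:ℝ)⁻¹) with hbk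
  set cp : ℝ := (p:ℝ) ^ (-(4:ℝ)⁻¹) with hcp
  set ck : ℝ := (k:ℝ) ^ (-(4:ℝ)⁻¹) with hck
  have hbp_nonneg : 0 ≤ bp := Real.rpow_nonneg (Nat.cast_nonneg p) _
  have hbk_nonneg : 0 ≤ bk := Real.rpow_nonneg (Nat.cast_nonneg k) _
  have hcp_nonneg : 0 ≤ cp := Real.rpow_nonneg (Nat.cast_nonneg p) _
  have hck_nonneg : 0 ≤ ck := Real.rpow_nonneg (Nat.cast_nonneg k) _
  refine ⟨2, ![bp, -bk], ![cp • up, ck • un], ?_, ?_⟩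
  case _ =>
    -- KKT point
    set v : Fin 2 → ℝ := ![bp, -bk] with hv
    set w : Fin 2 → EuclideanSpace ℝ (Fin d) := ![cp • up, ck • un] with hw
    have hv0 : v 0 = bp := rfl
    have hv1 : v 1 = -bk := rfl
    have hw0 : w 0 = cp • up := rfl
    have hw1 : w 1 = ck • un := rfl
    have hiw0 : ∀ i, (inner ℝ (w 0) (x i) : ℝ) = cp * (if i ∈ Pos then 1 else 0) := by
      intro i; rw [hw0, real_inner_smul_left, hinner_up]
    have hiw1 : ∀ i, (inner ℝ (w 1) (x i) : ℝ) = ck * (if i ∈ Neg then 1 else 0) := by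
      intro i; rw [hw1, real_inner_smul_left, hinner_un]
    have hnet : ∀ z, netNB v w z =
        v 0 * relu (inner ℝ (w 0) z : ℝ) + v 1 * relu (inner ℝ (w 1) z : ℝ) := by
      intro z; rw [netNB, Fin.sum_univ_two]
    have hppos : ∀ i, i ∈ Pos → (0:ℝ) < p := by
      intro i hi
      have : 0 < p := Finset.card_pos.2 ⟨i, hi⟩
      exact_mod_cast this
    have hkpos : ∀ i, i ∈ Neg → (0:ℝ) < k := by
      intro i hi
      have : 0 < k := Finset.card_pos.2 ⟨i, hi⟩
      exact_mod_cast this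
    have hbpcp : ∀ i, i ∈ Pos → bp * cp = 1 := by
      intro i hi
      rw [hbp, hcp, ← Real.rpow_add (hppos i hi)]
      norm_num
    have hbkck : ∀ i, i ∈ Neg → bk * ck = 1 := by
      intro i hi
      rw [hbk, hck, ← Real.rpow_add (hkpos i hi)]
      norm_num
    have hmargin : ∀ i, y i * netNB v w (x i) = 1 := by
      intro i
      rw [hnet]
      rcases hy i with h1 | h1
      · have hiP : i ∈ Pos := (hPmem i).2 h1
        have hiN : i ∉ Neg := by
          rw [hNmem]; rw [h1]; norm_num
        rw [hiw0 i, hiw1 i, if_pos hiP, if_neg hiN, mul_one, mul_zero,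
          hrelu_nonpos 0 le_rfl, mul_zero, add_zero, hrelu_id cp hcp_nonneg,
          hv0, hbpcp i hiP, h1, one_mul]
      · have hiN : i ∈ Neg := (hNmem i).2 h1
        have hiP : i ∉ Pos := by
          rw [hPmem]; rw [h1]; norm_num
        rw [hiw0 i, hiw1 i, if_neg hiP, if_pos hiN, mul_one, mul_zero,
          hrelu_nonpos 0 le_rfl, mul_zero, zero_add, hrelu_id ck hck_nonneg,
          hv1, h1]
        have hbc := hbkck i hiN
        ring_nf
        ring_nf at hbc
        linarith [hbc]
    constructor
    · intro i; rw [hmargin i]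
    have hrpow : ∀ t : ℝ, 0 < t →
        t * (t ^ (-(2:ℝ)⁻¹) * t ^ (-(4:ℝ)⁻¹)) = t ^ ((4:ℝ)⁻¹) := by
      intro t ht
      calc t * (t ^ (-(2:ℝ)⁻¹) * t ^ (-(4:ℝ)⁻¹))
          = t ^ (1:ℝ) * (t ^ (-(2:ℝ)⁻¹) * t ^ (-(4:ℝ)⁻¹)) := by rw [Real.rpow_one]
        _ = t ^ ((1:ℝ) + (-(2:ℝ)⁻¹ + -(4:ℝ)⁻¹)) := by
            rw [← Real.rpow_add ht, ← Real.rpow_add ht]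
        _ = t ^ ((4:ℝ)⁻¹) := by norm_num
    set lam : Fin m → ℝ :=
      fun i => if y i = 1 then (p:ℝ) ^ (-(2:ℝ)⁻¹) else (k:ℝ) ^ (-(2:ℝ)⁻¹) with hlam
    set sv : Fin m → Fin 2 → ℝ :=
      fun i => ![if y i = 1 then 1 else 0, if y i = -1 then 1 else 0] with hsv
    refine ⟨lam, sv, ?_, ?_, ?_, ?_, ?_, ?_, ?_⟩
    · intro i
      have hli : lam i = if y i = 1 then (p:ℝ) ^ (-(2:ℝ)⁻¹) else (k:ℝ) ^ (-(2:ℝ)⁻¹) := rfl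
      rw [hli]
      split_ifs <;> exact Real.rpow_nonneg (Nat.cast_nonneg _) _
    · intro i j
      rcases show j = 0 ∨ j = 1 from by omega with rfl | rfl
      · show (if y i = 1 then (1:ℝ) else 0) ∈ Set.Icc (0:ℝ) 1
        split_ifs <;> simp
      · show (if y i = -1 then (1:ℝ) else 0) ∈ Set.Icc (0:ℝ) 1
        split_ifs <;> simp
    · intro i j hpos
      rcases show j = 0 ∨ j = 1 from by omega with rfl | rfl
      · rw [hiw0 i] at hpos
        have hiP : i ∈ Pos := by
          by_contra hiP
          rw [if_neg hiP, mul_zero] at hpos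
          exact lt_irrefl _ hpos
        have h1 := (hPmem i).1 hiP
        show (if y i = 1 then (1:ℝ) else 0) = 1
        rw [if_pos h1]
      · rw [hiw1 i] at hpos
        have hiN : i ∈ Neg := by
          by_contra hiN
          rw [if_neg hiN, mul_zero] at hpos
          exact lt_irrefl _ hpos
        have h1 := (hNmem i).1 hiN
        show (if y i = -1 then (1:ℝ) else 0) = 1
        rw [if_pos h1]
    · intro i j hneg
      exfalso
      rcases show j = 0 ∨ j = 1 from by omega with rfl | rfl
      · rw [hiw0 i] at hneg
        have : 0 ≤ cp * (if i ∈ Pos then 1 else 0) := by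
          apply mul_nonneg hcp_nonneg
          split_ifs <;> norm_num
        linarith
      · rw [hiw1 i] at hneg
        have : 0 ≤ ck * (if i ∈ Neg then 1 else 0) := by
          apply mul_nonneg hck_nonneg
          split_ifs <;> norm_num
        linarith
    · intro j
      rcases show j = 0 ∨ j = 1 from by omega with rfl | rfl
      · have hterm : ∀ i, (lam i * y i * v 0 * sv i 0) • x i
            = if y i = 1 then cp • x i else 0 := by
          intro i
          have hsv0 : sv i 0 = if y i = 1 then 1 else 0 := rfl
          rcases hy i with h1 | h1
          · have hiP : i ∈ Pos := (hPmem i).2 h1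
            have hscal : lam i * y i * v 0 * sv i 0 = cp := by
              rw [hsv0, if_pos h1]
              have hl : lam i = (p:ℝ) ^ (-(2:ℝ)⁻¹) := by simp [hlam, h1]
              rw [hl, h1, hv0, hbp, mul_one, mul_one, ← Real.rpow_add (hppos i hiP), hcp]
              norm_num
            rw [if_pos h1, hscal]
          · have h1' : y i ≠ 1 := by rw [h1]; norm_num
            rw [if_neg h1', hsv0, if_neg h1', mul_zero, zero_smul]
        calc w 0 = cp • up := hw0
          _ = ∑ i ∈ Pos, cp • x i := by rw [hup, Finset.smul_sum]
          _ = ∑ i, if y i = 1 then cp • x i else 0 := by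
              rw [hPos, Finset.sum_filter]
          _ = ∑ i, (lam i * y i * v 0 * sv i 0) • x i :=
              Finset.sum_congr rfl fun i _ => (hterm i).symm
      · have hterm : ∀ i, (lam i * y i * v 1 * sv i 1) • x i
            = if y i = -1 then ck • x i else 0 := by
          intro i
          have hsv1 : sv i 1 = if y i = -1 then 1 else 0 := rfl
          rcases hy i with h1 | h1
          · have h1' : y i ≠ -1 := by rw [h1]; norm_num
            rw [if_neg h1', hsv1, if_neg h1', mul_zero, zero_smul]
          · have hiN : i ∈ Neg := (hNmem i).2 h1
            have h1' : y i ≠ 1 := by rw [h1]; norm_num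
            have hscal : lam i * y i * v 1 * sv i 1 = ck := by
              rw [hsv1, if_pos h1]
              have hl : lam i = (k:ℝ) ^ (-(2:ℝ)⁻¹) := by simp [hlam, h1']
              rw [hl, h1, hv1, hbk, mul_one]
              rw [show (k:ℝ) ^ (-(2:ℝ)⁻¹) * -1 * -((k:ℝ) ^ ((4:ℝ)⁻¹))
                = (k:ℝ) ^ (-(2:ℝ)⁻¹) * (k:ℝ) ^ ((4:ℝ)⁻¹) by ring]
              rw [← Real.rpow_add (hkpos i hiN), hck]
              norm_num
            rw [if_pos h1, hscal]
        calc w 1 = ck • un := hw1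
          _ = ∑ i ∈ Neg, ck • x i := by rw [hun, Finset.smul_sum]
          _ = ∑ i, if y i = -1 then ck • x i else 0 := by
              rw [hNeg, Finset.sum_filter]
          _ = ∑ i, (lam i * y i * v 1 * sv i 1) • x i :=
              Finset.sum_congr rfl fun i _ => (hterm i).symm
    · intro j
      rcases show j = 0 ∨ j = 1 from by omega with rfl | rfl
      · have hterm : ∀ i, lam i * y i * relu (inner ℝ (w 0) (x i) : ℝ)
            = if y i = 1 then (p:ℝ) ^ (-(2:ℝ)⁻¹) * cp else 0 := by
          intro i
          rw [hiw0 i]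
          rcases hy i with h1 | h1
          · have hiP : i ∈ Pos := (hPmem i).2 h1
            rw [if_pos h1, if_pos hiP, mul_one, hrelu_id cp hcp_nonneg]
            have hl : lam i = (p:ℝ) ^ (-(2:ℝ)⁻¹) := by simp [hlam, h1]
            rw [hl, h1, mul_one]
          · have h1' : y i ≠ 1 := by rw [h1]; norm_num
            have hiP : i ∉ Pos := fun hc => h1' ((hPmem i).1 hc)
            rw [if_neg h1', if_neg hiP, mul_zero, hrelu_nonpos 0 le_rfl, mul_zero]
        rw [Finset.sum_congr rfl fun i _ => hterm i, ← Finset.sum_filter, ← hPos,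
          Finset.sum_const, nsmul_eq_mul, ← hp]
        rcases Nat.eq_zero_or_pos p with hp0 | hp0
        · rw [hv0, hbp, hcp, hp0]
          simp [Real.zero_rpow (show ((4:ℝ)⁻¹) ≠ 0 by norm_num)]
        · have hppos' : (0:ℝ) < p := by exact_mod_cast hp0
          rw [hv0, hbp, hcp]
          exact (hrpow (p:ℝ) hppos').symm
      · have hterm : ∀ i, lam i * y i * relu (inner ℝ (w 1) (x i) : ℝ)
            = if y i = -1 then -((k:ℝ) ^ (-(2:ℝ)⁻¹) * ck) else 0 := by
          intro i
          rw [hiw1 i]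
          rcases hy i with h1 | h1
          · have h1' : y i ≠ -1 := by rw [h1]; norm_num
            have hiN : i ∉ Neg := fun hc => h1' ((hNmem i).1 hc)
            rw [if_neg h1', if_neg hiN, mul_zero, hrelu_nonpos 0 le_rfl, mul_zero]
          · have hiN : i ∈ Neg := (hNmem i).2 h1
            have h1' : y i ≠ 1 := by rw [h1]; norm_num
            rw [if_pos h1, if_pos hiN, mul_one, hrelu_id ck hck_nonneg]
            have hl : lam i = (k:ℝ) ^ (-(2:ℝ)⁻¹) := by simp [hlam, h1']
            rw [hl, h1]
            ring
        rw [Finset.sum_congr rfl fun i _ => hterm i, ← Finset.sum_filter, ← hNeg,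
          Finset.sum_const, nsmul_eq_mul, ← hk]
        rcases Nat.eq_zero_or_pos k with hk0 | hk0
        · rw [hv1, hbk, hck, hk0]
          simp [Real.zero_rpow (show ((4:ℝ)⁻¹) ≠ 0 by norm_num)]
        · have hkpos' : (0:ℝ) < k := by exact_mod_cast hk0
          rw [hv1, hbk, hck, mul_neg, neg_inj]
          exact (hrpow (k:ℝ) hkpos').symm
    · intro i
      rw [hmargin i, sub_self, mul_zero]
  case _ =>
    have hsubset : {z : EuclideanSpace ℝ (Fin d) | (inner ℝ up z : ℝ) ≤ 0}
        ⊆ {z : EuclideanSpace ℝ (Fin d) | netNB ![bp, -bk] ![cp • up, ck • un] z ≤ 0} := by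
      intro z hz
      simp only [Set.mem_setOf_eq] at hz ⊢
      have hnet : netNB ![bp, -bk] ![cp • up, ck • un] z
          = bp * relu (inner ℝ (cp • up) z : ℝ) + (-bk) * relu (inner ℝ (ck • un) z : ℝ) := by
        rw [netNB, Fin.sum_univ_two]
        simp [Matrix.cons_val_zero, Matrix.cons_val_one, Matrix.head_cons]
      rw [hnet]
      have h1 : (inner ℝ (cp • up) z : ℝ) ≤ 0 := by
        rw [real_inner_smul_left]
        exact mul_nonpos_of_nonneg_of_nonpos hcp_nonneg hz
      rw [hrelu_nonpos _ h1, mul_zero, zero_add]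
      exact mul_nonpos_of_nonpos_of_nonneg (neg_nonpos.2 hbk_nonneg) (hrelu_nonneg _)
    have hK : ({i | y i = -1} : Set (Fin m)).ncard = k := by
      rw [hk, hNeg, ← Set.ncard_coe_finset]
      congr 1
      ext i
      simp
    rw [hK]
    by_cases hk1 : k ≤ 1
    · have hb : (1:ℝ)/2 - 1/2^k ≤ 0 := by
        interval_cases k <;> norm_num
      exact le_trans hb ENNReal.toReal_nonneg
    · push_neg at hk1
      have hd2 : 2 ≤ d := by
        have horthon : Orthonormal ℝ x := by
          rw [orthonormal_iff_ite]
          intro i j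
          by_cases hij : i = j
          · rw [hij, if_pos rfl, real_inner_self_eq_norm_mul_norm, hx j, mul_one]
          · rw [if_neg hij]
            exact horth i j hij
        have hli := horthon.linearIndependent
        have hmd : m ≤ d := by
          have hcard := LinearIndependent.fintype_card_le_finrank hli
          rw [Fintype.card_fin, finrank_euclideanSpace_fin] at hcard
          exact hcard
        have hkm : k ≤ m := by
          rw [hk]
          calc Neg.card ≤ Finset.univ.card := Finset.card_le_univ Neg
            _ = m := by rw [Finset.card_univ, Fintype.card_fin]
        omega
      have hhalf := unifSphere_half hd2 up _ hsubset
      have hb2 : (1:ℝ)/2 - 1/2^k ≤ 1/2 := by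
        have : (0:ℝ) ≤ 1/2^k := by positivity
        linarith
      exact le_trans hb2 hhalf
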